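/- Let ρ be a real number with ρ ∉ [0,1], and let f, g be real numbers. Then the following two conditions are equivalent: (A) for every real number a with |a| < 2√(|ρ(1−ρ)|), both complex roots of z² − (1+ia)·g·z − (1+ia)·f = 0 have strictly negative real part; (B) f < 0 and g < 0, and in addition either f + g² ≥ 0 or 4|ρ(1−ρ)| ≤ −g²/(f+g²). (This is the spectral content of asymptotic stability of the flock for arbitrary N, since for ρ ∉ [0,1] the eigenvalues of the reduced Laplacian are 1 + ia with a ranging densely, as N → ∞, over the interval (−2√(|ρ(1−ρ)|), 2√(|ρ(1−ρ)|)).) -/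

import Mathlib

open Complex

-- Routh-Hurwitz for a pair of real parts
lemma rh_real (α β γ δ : ℝ) :
    (α < 0 ∧ γ < 0) ↔ (α + γ < 0 ∧ 0 < α * γ * ((α + γ) ^ 2 + (β - δ) ^ 2)) := by
  constructor
  · rintro ⟨h1, h2⟩
    constructor
    · linarith
    · have hpos : 0 < α * γ := mul_pos_of_neg_of_neg h1 h2
      have hsq : 0 < (α + γ) ^ 2 := by nlinarith
      have : 0 < (α + γ) ^ 2 + (β - δ) ^ 2 := by nlinarith [sq_nonneg (β - δ)]
      exact mul_pos hpos this
  · rintro ⟨h1, h2⟩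
    have hprod : 0 < α * γ := by
      rcases lt_trichotomy (α * γ) 0 with h | h | h
      · nlinarith [sq_nonneg (α + γ), sq_nonneg (β - δ)]
      · simp [h] at h2
      · exact h
    constructor
    · nlinarith
    · nlinarith

lemma stable_iff (B C : ℂ) :
    (∀ z : ℂ, z ^ 2 - B * z - C = 0 → z.re < 0) ↔
    (B.re < 0 ∧ B.re ^ 2 * C.re + B.re * B.im * C.im + C.im ^ 2 < 0) := by
  obtain ⟨w, hw⟩ : ∃ w : ℂ, w ^ 2 = B ^ 2 + 4 * C := by
    exact IsAlgClosed.exists_pow_nat_eq (B ^ 2 + 4 * C) zero_lt_two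
  set r : ℂ := (B + w) / 2 with hr
  set s : ℂ := (B - w) / 2 with hs
  have hfac : ∀ z : ℂ, z ^ 2 - B * z - C = (z - r) * (z - s) := by
    intro z
    rw [hr, hs]
    field_simp
    ring_nf
    first
    | linear_combination hw | linear_combination -hw
    | linear_combination 2*hw | linear_combination -2*hw
    | linear_combination 4*hw | linear_combination -4*hw
    | linear_combination hw/2 | linear_combination -hw/2
    | linear_combination hw/4 | linear_combination -hw/4
  have hroot : (∀ z : ℂ, z ^ 2 - B * z - C = 0 → z.re < 0) ↔ (r.re < 0 ∧ s.re < 0) := by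
    constructor
    · intro h
      constructor
      · exact h r (by rw [hfac]; ring)
      · exact h s (by rw [hfac]; ring)
    · rintro ⟨h1, h2⟩ z hz
      rw [hfac] at hz
      rcases mul_eq_zero.mp hz with h | h
      · rw [sub_eq_zero] at h; rw [h]; exact h1
      · rw [sub_eq_zero] at h; rw [h]; exact h2
  rw [hroot]
  have hB : B = r + s := by rw [hr, hs]; ring
  have hC : C = -(r * s) := by
    rw [hr, hs]
    field_simp
    first
    | linear_combination hw | linear_combination -hw
    | linear_combination 2*hw | linear_combination -2*hw
    | linear_combination 4*hw | linear_combination -4*hw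
    | linear_combination hw/2 | linear_combination -hw/2
    | linear_combination hw/4 | linear_combination -hw/4
  have hBre : B.re = r.re + s.re := by rw [hB]; simp
  have hBim : B.im = r.im + s.im := by rw [hB]; simp
  have hCre : C.re = -(r.re * s.re - r.im * s.im) := by rw [hC]; simp [Complex.mul_re]
  have hCim : C.im = -(r.re * s.im + r.im * s.re) := by rw [hC]; simp [Complex.mul_im]
  rw [hBre, hBim, hCre, hCim]
  rw [rh_real r.re r.im s.re s.im]
  constructor
  · rintro ⟨h1, h2⟩; exact ⟨h1, by nlinarith⟩
  · rintro ⟨h1, h2⟩; exact ⟨h1, by nlinarith⟩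

theorem stmt_6 (ρ : ℝ) (hρ : ρ ∉ Set.Icc (0 : ℝ) 1) (f g : ℝ) :
    (∀ a : ℝ, |a| < 2 * Real.sqrt |ρ * (1 - ρ)| →
        ∀ z : ℂ, z ^ 2 - (1 + Complex.I * a) * g * z - (1 + Complex.I * a) * f = 0 →
          z.re < 0) ↔
      (f < 0 ∧ g < 0 ∧ (f + g ^ 2 ≥ 0 ∨ 4 * |ρ * (1 - ρ)| ≤ -g ^ 2 / (f + g ^ 2))) := by
  set M : ℝ := |ρ * (1 - ρ)| with hMdef
  have hρ' : ρ < 0 ∨ 1 < ρ := by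
    simp only [Set.mem_Icc, not_and_or, not_le] at hρ
    tauto
  have hneg : ρ * (1 - ρ) < 0 := by rcases hρ' with h | h <;> nlinarith
  have hM : 0 < M := abs_pos.mpr (ne_of_lt hneg)
  have hsqrtM : 0 < Real.sqrt M := Real.sqrt_pos.mpr hM
  -- rewrite the inner condition using stable_iff
  have hiff : ∀ a : ℝ,
      (∀ z : ℂ, z ^ 2 - (1 + Complex.I * a) * g * z - (1 + Complex.I * a) * f = 0 →
        z.re < 0) ↔ (g < 0 ∧ f * (g ^ 2 + a ^ 2 * (f + g ^ 2)) < 0) := by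
    intro a
    have := stable_iff ((1 + Complex.I * a) * g) ((1 + Complex.I * a) * f)
    simp only [Complex.add_re, Complex.add_im, Complex.mul_re, Complex.mul_im,
      Complex.one_re, Complex.one_im, Complex.I_re, Complex.I_im,
      Complex.ofReal_re, Complex.ofReal_im] at this
    rw [this]
    constructor
    · rintro ⟨h1, h2⟩
      constructor
      · linarith
      · nlinarith
    · rintro ⟨h1, h2⟩
      constructor
      · linarith
      · nlinarith
  simp only [hiff]
  constructor
  · intro h
    have h0 := h 0 (by simpa using by positivity)
    obtain ⟨hg, hf0⟩ := h0
    simp only [ne_eq, OfNat.ofNat_ne_zero, not_false_eq_true, zero_pow, mul_zero,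
      add_zero] at hf0
    have hg2 : 0 < g ^ 2 := by nlinarith
    have hf : f < 0 := by nlinarith
    refine ⟨hf, hg, ?_⟩
    by_cases hfg : 0 ≤ f + g ^ 2
    · exact Or.inl hfg
    · right
      push_neg at hfg
      by_contra hcon
      push_neg at hcon
      set t : ℝ := -g ^ 2 / (f + g ^ 2) with ht
      have ht0 : 0 ≤ t := div_nonneg_iff.mpr (Or.inr ⟨by nlinarith, by linarith⟩)
      have hta : |Real.sqrt t| < 2 * Real.sqrt M := by
        rw [_root_.abs_of_nonneg (Real.sqrt_nonneg t)]
        calc Real.sqrt t < Real.sqrt (4 * M) := by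
              apply Real.sqrt_lt_sqrt ht0
              linarith
          _ = 2 * Real.sqrt M := by
              rw [show (4 : ℝ) * M = 2 ^ 2 * M by ring, Real.sqrt_mul (by positivity),
                Real.sqrt_sq (by norm_num)]
      have := (h (Real.sqrt t) hta).2
      rw [Real.sq_sqrt ht0] at this
      have hne : f + g ^ 2 ≠ 0 := ne_of_lt hfg
      have hkey : g ^ 2 + t * (f + g ^ 2) = 0 := by
        rw [ht]
        field_simp
        ring
      rw [hkey, mul_zero] at this
      exact lt_irrefl 0 this
  · rintro ⟨hf, hg, hd⟩ a ha
    refine ⟨hg, ?_⟩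
    have ha2 : a ^ 2 < 4 * M := by
      have h1 : |a| ^ 2 < (2 * Real.sqrt M) ^ 2 := by
        apply pow_lt_pow_left₀ ha (abs_nonneg a) (by norm_num)
      rw [_root_.sq_abs] at h1
      have : (2 * Real.sqrt M) ^ 2 = 4 * M := by
        rw [mul_pow, Real.sq_sqrt hM.le]; norm_num
      linarith
    have hg2 : 0 < g ^ 2 := by nlinarith
    rcases hd with hfg | hle
    · have : 0 < g ^ 2 + a ^ 2 * (f + g ^ 2) := by nlinarith [sq_nonneg a]
      nlinarith
    · have hfg : f + g ^ 2 < 0 := by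
        rcases lt_trichotomy (f + g ^ 2) 0 with h' | h' | h'
        · exact h'
        · rw [h', div_zero] at hle; linarith
        · have : -g ^ 2 / (f + g ^ 2) ≤ 0 := by
            apply div_nonpos_of_nonpos_of_nonneg <;> nlinarith
          linarith
      have h3 : a ^ 2 < -g ^ 2 / (f + g ^ 2) := lt_of_lt_of_le ha2 hle
      have h4 : -g ^ 2 < a ^ 2 * (f + g ^ 2) := (lt_div_iff_of_neg hfg).mp h3
      nlinarith
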